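/- arXiv:2412.19203 — 2 statements merged into one kernel-verified Lean document; each statement's English description precedes it below -/
import Mathlib

section
/- Every graph in 𝓕₂ ∪ {G₀} is an induced subgraph of some member of 𝓕₁: for all integers 0 ≤ k ≤ t there exists s ≥ 3 such that the spider S(t,k) is isomorphic to an induced subgraph of F₁(s), and G₀ is isomorphic to an induced subgraph of F₁(3). -/
/-- Vertex type of the graph `F₁(s)`. -/
inductive F1Vert (s : ℕ) : Type
  | v1 : F1Vert s
  | v2 : F1Vert s
  | a1 : F1Vert s
  | a2 : F1Vert s
  | u : Fin s → F1Vert s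
  | p : {i : Fin s // 2 ≤ (i : ℕ)} → F1Vert s
  deriving DecidableEq, Fintype

/-- Base relation generating the edges of `F₁(s)` (indices are 0-based: `u 0 = u₁`, …;
pendant vertices `p i` exist for `i ≥ 2`, i.e. at each of `u₃, …, u_s`). -/
def F1Rel (s : ℕ) : F1Vert s → F1Vert s → Prop
  | .v2, .u _ => True
  | .v1, .u i => 2 ≤ (i : ℕ)
  | .v1, .a1 => True
  | .a1, .u i => (i : ℕ) = 0
  | .v1, .a2 => True
  | .a2, .u i => (i : ℕ) = 1
  | .u i, .p j => i = j.1
  | _, _ => False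

/-- The graph `F₁(s)`: obtained from `K_{2,s}` with parts `{v₁, v₂}` and `{u₁, …, u_s}` by
subdividing the edges `v₁u₁` and `v₁u₂` (creating `a₁`, `a₂`) and attaching a pendant edge
(to `p_i`) at each of `u₃, …, u_s`. -/
def F1 (s : ℕ) : SimpleGraph (F1Vert s) := SimpleGraph.fromRel (F1Rel s)
/-- Base relation for the spider `S(t,k)`: vertex `Sum.inl ()` is the center `c`,
`Sum.inr (Sum.inl j)` is the leaf `ℓ_{j+1}` of the star `K_{1,t}`, and
`Sum.inr (Sum.inr j)` is the pendant vertex `m_{j+1}` attached to `ℓ_{j+1}`. -/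
def SpiderRel (t k : ℕ) :
    (Unit ⊕ Fin t ⊕ Fin k) → (Unit ⊕ Fin t ⊕ Fin k) → Prop
  | .inl _, .inr (.inl _) => True
  | .inr (.inl i), .inr (.inr j) => (i : ℕ) = (j : ℕ)
  | _, _ => False

/-- The spider `S(t,k)` (for `k ≤ t`): the tree obtained from the star `K_{1,t}` by attaching
a new pendant vertex to each of the first `k` leaves. -/
def Spider (t k : ℕ) : SimpleGraph (Unit ⊕ Fin t ⊕ Fin k) :=
  SimpleGraph.fromRel (SpiderRel t k)

/-- The 6-vertex tree `G₀` with vertices `c = 0`, `a = 1`, `b = 2`, `d = 3`, `e = 4`, `f = 5`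
and edges `ca, cb, cd, de, df` (obtained from `K_{1,3}` by attaching two pendant edges to one
of its leaves). -/
def G0 : SimpleGraph (Fin 6) :=
  SimpleGraph.fromRel (fun i j =>
    (i = 0 ∧ j = 1) ∨ (i = 0 ∧ j = 2) ∨ (i = 0 ∧ j = 3) ∨
    (i = 3 ∧ j = 4) ∨ (i = 3 ∧ j = 5))
instance F1Rel.decRel (s : ℕ) : DecidableRel (F1Rel s) := fun a b => by
  cases a <;> cases b <;> simp only [F1Rel] <;> infer_instance

instance (s : ℕ) : DecidableRel (F1 s).Adj := fun a b =>
  decidable_of_iff _ (SimpleGraph.fromRel_adj (F1Rel s) a b).symm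

instance : DecidableRel G0.Adj := fun a b =>
  decidable_of_iff _ (SimpleGraph.fromRel_adj _ a b).symm

/-- The embedding map of the spider into `F₁(t+3)`. -/
def spiderMap (t k : ℕ) (hk : k ≤ t) : Unit ⊕ Fin t ⊕ Fin k → F1Vert (t + 3)
  | .inl _ => .v2
  | .inr (.inl j) => .u ⟨j + 2, by have := j.isLt; omega⟩
  | .inr (.inr j) => .p ⟨⟨j + 2, by have := j.isLt; omega⟩, by simp⟩

/-- every graph in `𝓕₂ ∪ {G₀}` is an induced subgraph of some member of `𝓕₁`:
for all integers `0 ≤ k ≤ t` there is `s ≥ 3` such that the spider `S(t,k)` embeds as an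
induced subgraph into `F₁(s)`, and `G₀` embeds as an induced subgraph into `F₁(3)`. -/
theorem spider_and_G0_embed_into_F1 :
    (∀ t k : ℕ, k ≤ t → ∃ s : ℕ, 3 ≤ s ∧ Nonempty (Spider t k ↪g F1 s)) ∧
      Nonempty (G0 ↪g F1 3) := by
  constructor
  · intro t k hk
    refine ⟨t + 3, by omega, ⟨⟨⟨spiderMap t k hk, ?_⟩, ?_⟩⟩⟩
    · rintro (a | a | a) (b | b | b) h <;>
        simp only [spiderMap, F1Vert.u.injEq, F1Vert.p.injEq, Subtype.mk.injEq,
          Fin.mk.injEq] at h <;>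
        first
        | rfl
        | (congr 1; congr 1; exact Fin.ext (by omega))
        | simp at h
    · intro a b
      change (F1 (t+3)).Adj (spiderMap t k hk a) (spiderMap t k hk b) ↔ (Spider t k).Adj a b
      revert a b
      rintro (a | a | a) (b | b | b) <;>
        simp [spiderMap, Spider, F1, SpiderRel, F1Rel, SimpleGraph.fromRel_adj,
          Fin.ext_iff]
  · have h : ∀ a b : Fin 6, (F1 3).Adj
        (![.v1, .a1, .a2, .u 2, .v2, .p ⟨2, by decide⟩] a)
        (![F1Vert.v1, .a1, .a2, .u 2, .v2, .p ⟨2, by decide⟩] b) ↔ G0.Adj a b := by decide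
    exact ⟨⟨⟨![.v1, .a1, .a2, .u 2, .v2, .p ⟨2, by decide⟩], by decide⟩,
      fun {a b} => h a b⟩⟩
end

section
/- Suppose G is a connected graph with λ₂(G) ≤ 1 which has neither K₅ nor K_{3,3} as a minor and whose girth equals 5, and let x₁x₂x₃x₄x₅x₁ be a 5-cycle in G. If u and v are distinct vertices outside the cycle with N(u) ∩ {x₁,…,x₅} = {x_i} and N(v) ∩ {x₁,…,x₅} = {x_j} for some i ≠ j, then u is adjacent to v if and only if x_i and x_j are non-adjacent (i.e., u ≁ v when x_i ∼ x_j, and u ∼ v when x_i ≁ x_j). -/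
/-- The adjacency matrix of a simple graph over `ℝ` is Hermitian. -/
lemma adjMatrix_isHermitian {V : Type*} [Fintype V] (G : SimpleGraph V)
    [DecidableRel G.Adj] : ((G.adjMatrix ℝ)).IsHermitian := by
  rw [Matrix.IsHermitian, Matrix.conjTranspose_eq_transpose_of_trivial]
  exact G.isSymm_adjMatrix

/-- The number of eigenvalues (counted with multiplicity) of the real adjacency matrix of `G`
satisfying the predicate `p`. -/
noncomputable def eigCount {V : Type*} [Fintype V] [DecidableEq V]
    (G : SimpleGraph V) (p : ℝ → Prop) : ℕ := by
  classical
  exact (Finset.univ.filter fun i =>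
    p ((adjMatrix_isHermitian G).eigenvalues i)).card
/-- `HasMinor G H` : `H` is a minor of `G`, witnessed by a family of pairwise disjoint
nonempty branch sets, each inducing a connected subgraph of `G`, such that every edge of `H`
is realized by an edge of `G` between the corresponding branch sets. -/
def HasMinor {V : Type*} {W : Type*} (G : SimpleGraph V) (H : SimpleGraph W) : Prop :=
  ∃ B : W → Set V,
    (∀ w, (B w).Nonempty) ∧
    (Pairwise fun w₁ w₂ => Disjoint (B w₁) (B w₂)) ∧
    (∀ w, (G.induce (B w)).Connected) ∧
    (∀ ⦃w₁ w₂⦄, H.Adj w₁ w₂ → ∃ a ∈ B w₁, ∃ b ∈ B w₂, G.Adj a b)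

/-- `G` is planar in the sense of Wagner: it has neither `K₅` nor `K_{3,3}` as a minor. -/
def WagnerPlanar {V : Type*} (G : SimpleGraph V) : Prop :=
  ¬ HasMinor G (⊤ : SimpleGraph (Fin 5)) ∧
    ¬ HasMinor G (completeBipartiteGraph (Fin 3) (Fin 3))

/-! ### Auxiliary spectral lemmas -/

open Matrix in
lemma quad_expand {n : Type*} [Fintype n] [DecidableEq n] {A : Matrix n n ℝ}
    (hA : A.IsHermitian) (x x' : n → ℝ) :
    x ⬝ᵥ (A *ᵥ x') = ∑ k, hA.eigenvalues k *
      (((star (hA.eigenvectorUnitary : Matrix n n ℝ)) *ᵥ x) k *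
       ((star (hA.eigenvectorUnitary : Matrix n n ℝ)) *ᵥ x') k) := by
  set U : Matrix n n ℝ := (hA.eigenvectorUnitary : Matrix n n ℝ) with hU
  have hsU : star U = Uᵀ := by
    rw [← conjTranspose_eq_transpose_of_trivial]; rfl
  conv_lhs => rw [hA.spectral_theorem, Unitary.conjStarAlgAut_apply]
  rw [← mulVec_mulVec, ← mulVec_mulVec, dotProduct_mulVec, ← mulVec_transpose, ← hsU]
  simp [dotProduct, mulVec_diagonal, Function.comp]
  ring_nf
  congr 1; ext k; ring

open Matrix in
lemma dot_expand {n : Type*} [Fintype n] [DecidableEq n] {A : Matrix n n ℝ}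
    (hA : A.IsHermitian) (x x' : n → ℝ) :
    x ⬝ᵥ x' = ∑ k,
      (((star (hA.eigenvectorUnitary : Matrix n n ℝ)) *ᵥ x) k *
       ((star (hA.eigenvectorUnitary : Matrix n n ℝ)) *ᵥ x') k) := by
  set U : Matrix n n ℝ := (hA.eigenvectorUnitary : Matrix n n ℝ) with hU
  have hsU : star U = Uᵀ := by
    rw [← conjTranspose_eq_transpose_of_trivial]; rfl
  have h1 : U * star U = 1 := (Matrix.mem_unitaryGroup_iff).mp hA.eigenvectorUnitary.2
  calc x ⬝ᵥ x' = x ⬝ᵥ ((U * star U) *ᵥ x') := by rw [h1, one_mulVec]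
    _ = _ := by
        rw [← mulVec_mulVec, dotProduct_mulVec, ← mulVec_transpose, ← hsU]
        rfl

open Matrix in
lemma no_two_big {n : Type*} [Fintype n] [DecidableEq n] {A : Matrix n n ℝ}
    (hA : A.IsHermitian)
    (hl : (Finset.univ.filter fun i => 1 < hA.eigenvalues i).card ≤ 1)
    {w1 w2 : n → ℝ}
    (h1 : w1 ⬝ᵥ w1 < w1 ⬝ᵥ (A *ᵥ w1))
    (h2 : w2 ⬝ᵥ w2 < w2 ⬝ᵥ (A *ᵥ w2))
    (h12 : w1 ⬝ᵥ (A *ᵥ w2) = w1 ⬝ᵥ w2)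
    (h21 : w2 ⬝ᵥ (A *ᵥ w1) = w2 ⬝ᵥ w1) : False := by
  classical
  set U : Matrix n n ℝ := (hA.eigenvectorUnitary : Matrix n n ℝ) with hU
  set c : (n → ℝ) → (n → ℝ) := fun x => (star U) *ᵥ x with hc
  set lam := hA.eigenvalues with hlam
  have key : ∀ x : n → ℝ, (∀ k, 1 < lam k → c x k = 0) →
      x ⬝ᵥ (A *ᵥ x) ≤ x ⬝ᵥ x := by
    intro x hx
    rw [quad_expand hA, dot_expand hA]
    apply Finset.sum_le_sum
    intro k _
    by_cases hk : 1 < lam k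
    · have := hx k hk
      simp only [hc] at this
      rw [show (star U *ᵥ x) k = c x k from rfl] at *
      rw [this]; simp
    · push_neg at hk
      nlinarith [sq_nonneg (c x k), mul_self_nonneg (c x k)]
  by_cases hex : ∃ k0, 1 < lam k0
  · obtain ⟨k0, hk0⟩ := hex
    have huniq : ∀ k, 1 < lam k → k = k0 := by
      intro k hk
      have := Finset.card_le_one.mp hl k (by simp [hk]) k0 (by simp [hk0])
      exact this
    set α := c w1 k0 with hα
    set β := c w2 k0 with hβ
    by_cases hα0 : α = 0
    · have := key w1 (fun k hk => by rw [huniq k hk]; exact hα0)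
      linarith
    · set w : n → ℝ := α • w2 - β • w1 with hw
      have hcw : ∀ k, 1 < lam k → c w k = 0 := by
        intro k hk
        rw [huniq k hk]
        simp only [hc, hw, mulVec_sub, mulVec_smul]
        simp only [Pi.sub_apply, Pi.smul_apply, smul_eq_mul]
        show α * β - β * α = 0
        ring
      have hQ := key w hcw
      have e1 : w ⬝ᵥ (A *ᵥ w) = α^2 * (w2 ⬝ᵥ (A *ᵥ w2)) - α*β*(w2 ⬝ᵥ (A *ᵥ w1))
          - α*β*(w1 ⬝ᵥ (A *ᵥ w2)) + β^2 * (w1 ⬝ᵥ (A *ᵥ w1)) := by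
        simp only [hw, mulVec_sub, mulVec_smul, sub_dotProduct, dotProduct_sub,
          smul_dotProduct, dotProduct_smul, smul_eq_mul]
        ring
      have e2 : w ⬝ᵥ w = α^2 * (w2 ⬝ᵥ w2) - α*β*(w2 ⬝ᵥ w1)
          - α*β*(w1 ⬝ᵥ w2) + β^2 * (w1 ⬝ᵥ w1) := by
        simp only [hw, sub_dotProduct, dotProduct_sub,
          smul_dotProduct, dotProduct_smul, smul_eq_mul]
        ring
      rw [e1, e2, h12, h21] at hQ
      nlinarith [sq_nonneg α, sq_nonneg β, mul_self_pos.mpr hα0, sq_nonneg (α*β)]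
  · push_neg at hex
    have := key w1 (fun k hk => absurd hk (not_lt.mpr (hex k)))
    linarith

/-! ### Vectors supported on a finite list of vertices -/

open Matrix in
lemma supp_dot {V : Type*} [Fintype V] [DecidableEq V] {m : ℕ} (p : Fin m → V)
    (cc : Fin m → ℝ) (z : V → ℝ) :
    (∑ k, cc k • (Pi.single (p k) (1:ℝ) : V → ℝ)) ⬝ᵥ z = ∑ k, cc k * z (p k) := by
  simp only [dotProduct, Finset.sum_apply, Pi.smul_apply, smul_eq_mul,
    Finset.sum_mul]
  rw [Finset.sum_comm]
  refine Finset.sum_congr rfl fun k _ => ?_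
  simp [Pi.single_apply, mul_comm]

open Matrix in
lemma supp_apply {V : Type*} [Fintype V] [DecidableEq V] {m : ℕ} {p : Fin m → V}
    (hp : Function.Injective p) (dd : Fin m → ℝ) (k : Fin m) :
    (∑ l, dd l • (Pi.single (p l) (1:ℝ) : V → ℝ)) (p k) = dd k := by
  simp only [Finset.sum_apply, Pi.smul_apply, smul_eq_mul, Pi.single_apply]
  rw [Finset.sum_eq_single k]
  · simp
  · intro l _ hl
    simp [hp.ne (Ne.symm hl), (hp.ne_iff).mpr (Ne.symm hl)]
  · simp

open Matrix in
lemma supp_mulVec {V : Type*} [Fintype V] [DecidableEq V] {m : ℕ} (A : Matrix V V ℝ)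
    (p : Fin m → V) (dd : Fin m → ℝ) (i : V) :
    (A *ᵥ (∑ l, dd l • (Pi.single (p l) (1:ℝ) : V → ℝ))) i = ∑ l, dd l * A i (p l) := by
  simp only [Matrix.mulVec, dotProduct, Finset.sum_apply, Pi.smul_apply,
    smul_eq_mul, Finset.mul_sum]
  rw [Finset.sum_comm]
  refine Finset.sum_congr rfl fun l _ => ?_
  simp [Pi.single_apply, mul_comm]

/-! ### Short cycles versus girth -/

open SimpleGraph in
lemma no_triangle {V : Type*} {G : SimpleGraph V} (hg : G.egirth = 5) {a b c : V}
    (hab : G.Adj a b) (hbc : G.Adj b c) (hca : G.Adj c a) : False := by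
  have h5 : (5 : ℕ∞) ≤ G.egirth := hg.ge
  rw [SimpleGraph.le_egirth] at h5
  have hc : (Walk.cons hab (Walk.cons hbc (Walk.cons hca Walk.nil))).IsCycle := by
    simp [Walk.isCycle_def, Walk.isTrail_def, hab.ne, hbc.ne, hca.ne, hab.ne',
      hbc.ne', hca.ne', Sym2.eq, Sym2.rel_iff']
  have := h5 a _ hc
  simp only [Walk.length_cons, Walk.length_nil] at this
  norm_num at this

open SimpleGraph in
lemma no_square {V : Type*} {G : SimpleGraph V} (hg : G.egirth = 5) {a b c d : V}
    (hac : a ≠ c) (hbd : b ≠ d)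
    (hab : G.Adj a b) (hbc : G.Adj b c) (hcd : G.Adj c d) (hda : G.Adj d a) : False := by
  have h5 : (5 : ℕ∞) ≤ G.egirth := hg.ge
  rw [SimpleGraph.le_egirth] at h5
  have hc : (Walk.cons hab (Walk.cons hbc (Walk.cons hcd (Walk.cons hda Walk.nil)))).IsCycle := by
    simp [Walk.isCycle_def, Walk.isTrail_def, hab.ne, hbc.ne, hcd.ne, hda.ne, hab.ne',
      hbc.ne', hcd.ne', hda.ne', hac, hbd, Sym2.eq, Sym2.rel_iff']
    aesop
  have := h5 a _ hc
  simp only [Walk.length_cons, Walk.length_nil] at this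
  norm_num at this

/-! ### The main spectral contradiction -/

lemma aux_pendant {V : Type*} [Fintype V] [DecidableEq V] (G : SimpleGraph V)
    [DecidableRel G.Adj]
    (hl : (Finset.univ.filter fun i =>
      1 < (adjMatrix_isHermitian G).eigenvalues i).card ≤ 1)
    (y : Fin 5 → V) (hinj : Function.Injective y)
    (hAdj : ∀ a b : Fin 5, G.Adj (y a) (y b) ↔ (b = a + 1 ∨ a = b + 1))
    (u v : V) (hyu : u ∉ Set.range y) (hyv : v ∉ Set.range y) (hune : u ≠ v)
    (hu : ∀ k, G.Adj u (y k) ↔ k = 0) (hv : ∀ k, G.Adj v (y k) ↔ k = 2)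
    (huv : ¬ G.Adj u v) : False := by
  have hynu : ∀ k, y k ≠ u := fun k h => hyu ⟨k, h⟩
  have hynv : ∀ k, y k ≠ v := fun k h => hyv ⟨k, h⟩
  have hp : Function.Injective (![y 0, y 1, y 2, y 3, y 4, u, v] : Fin 7 → V) := by
    intro a b hab
    fin_cases a <;> fin_cases b <;>
      first
        | rfl
        | (exact absurd (hinj hab) (by decide))
        | (exact absurd hab (hynu _))
        | (exact absurd hab.symm (hynu _))
        | (exact absurd hab (hynv _))
        | (exact absurd hab.symm (hynv _))
        | (exact absurd hab hune)
        | (exact absurd hab hune.symm)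
  have a_yy : ∀ a b : Fin 5, G.adjMatrix ℝ (y a) (y b)
      = if (b = a + 1 ∨ a = b + 1) then 1 else 0 := by
    intro a b
    simp only [SimpleGraph.adjMatrix_apply, hAdj]
  have a_uy : ∀ a : Fin 5, G.adjMatrix ℝ u (y a) = if a = 0 then 1 else 0 := by
    intro a; simp only [SimpleGraph.adjMatrix_apply, hu]
  have hu' : ∀ k, G.Adj (y k) u ↔ k = 0 := fun k => by rw [G.adj_comm]; exact hu k
  have hv' : ∀ k, G.Adj (y k) v ↔ k = 2 := fun k => by rw [G.adj_comm]; exact hv k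
  have hvu : ¬ G.Adj v u := fun h => huv h.symm
  have a_yu : ∀ a : Fin 5, G.adjMatrix ℝ (y a) u = if a = 0 then 1 else 0 := by
    intro a; simp only [SimpleGraph.adjMatrix_apply, hu']
  have a_vy : ∀ a : Fin 5, G.adjMatrix ℝ v (y a) = if a = 2 then 1 else 0 := by
    intro a; simp only [SimpleGraph.adjMatrix_apply, hv]
  have a_yv : ∀ a : Fin 5, G.adjMatrix ℝ (y a) v = if a = 2 then 1 else 0 := by
    intro a; simp only [SimpleGraph.adjMatrix_apply, hv']
  have a_uv : G.adjMatrix ℝ u v = 0 := by simp [SimpleGraph.adjMatrix_apply, huv]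
  have a_vu : G.adjMatrix ℝ v u = 0 := by simp [SimpleGraph.adjMatrix_apply, hvu]
  have a_uu : G.adjMatrix ℝ u u = 0 := by simp
  have a_vv : G.adjMatrix ℝ v v = 0 := by simp
  refine no_two_big (adjMatrix_isHermitian G) hl
    (w1 := ∑ k, (![2,2,2,1,1,1,1] : Fin 7 → ℝ) k •
      (Pi.single ((![y 0, y 1, y 2, y 3, y 4, u, v] : Fin 7 → V) k) (1:ℝ) : V → ℝ))
    (w2 := ∑ k, (![2,0,-2,-1,1,1,-1] : Fin 7 → ℝ) k •
      (Pi.single ((![y 0, y 1, y 2, y 3, y 4, u, v] : Fin 7 → V) k) (1:ℝ) : V → ℝ))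
    ?_ ?_ ?_ ?_ <;>
  · simp only [supp_dot]
    simp only [supp_mulVec, supp_apply hp]
    simp only [Fin.sum_univ_succ, Fin.sum_univ_zero, Matrix.cons_val_zero,
      Matrix.cons_val_succ, a_yy, a_uy, a_yu, a_vy, a_yv, a_uv, a_vu, a_uu, a_vv]
    norm_num
    try simp (config := { decide := true })
    try norm_num

/-- under the girth-5 setting with 5-cycle `x₀x₁x₂x₃x₄x₀`, if `u ≠ v` lie
outside the cycle with `N(u) ∩ cycle = {x i}` and `N(v) ∩ cycle = {x j}` for `i ≠ j`, then
`u ∼ v` exactly when `x i ≁ x j`. -/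
theorem girth_five_pendant_adjacency {V : Type*} [Fintype V] [DecidableEq V]
    (G : SimpleGraph V) (hconn : G.Connected) (hl : eigCount G (fun t => 1 < t) ≤ 1)
    (hplanar : WagnerPlanar G) (hgirth : G.egirth = 5)
    (x : Fin 5 → V) (hinj : Function.Injective x) (hcyc : ∀ i, G.Adj (x i) (x (i + 1)))
    (u v : V) (huv : u ≠ v) (i j : Fin 5) (hij : i ≠ j)
    (hu : u ∉ Set.range x) (hui : ∀ k, G.Adj u (x k) ↔ k = i)
    (hv : v ∉ Set.range x) (hvj : ∀ k, G.Adj v (x k) ↔ k = j) :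
    G.Adj u v ↔ ¬ G.Adj (x i) (x j) := by
  classical
  have hl' : (Finset.univ.filter fun k =>
      1 < (adjMatrix_isHermitian G).eigenvalues k).card ≤ 1 := hl
  have hAdjx : ∀ a b : Fin 5, G.Adj (x a) (x b) ↔ (b = a + 1 ∨ a = b + 1) := by
    intro a b
    constructor
    · intro hadj
      by_contra hcon
      push_neg at hcon
      obtain ⟨h1c, h2c⟩ := hcon
      have hne : a ≠ b := by rintro rfl; exact G.irrefl hadj
      have hcase : b = a + 2 ∨ a = b + 2 := by
        have hgen : ∀ a b : Fin 5, a ≠ b → b ≠ a + 1 → a ≠ b + 1 →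
            (b = a + 2 ∨ a = b + 2) := by decide
        exact hgen a b hne h1c h2c
      rcases hcase with hc | hc
      · subst hc
        have h12 : G.Adj (x (a+1)) (x (a+2)) := by
          have := hcyc (a+1)
          rwa [show a+1+1 = a+2 by rw [add_assoc]; rfl] at this
        exact no_triangle hgirth (hcyc a) h12 hadj.symm
      · subst hc
        have h12 : G.Adj (x (b+1)) (x (b+2)) := by
          have := hcyc (b+1)
          rwa [show b+1+1 = b+2 by rw [add_assoc]; rfl] at this
        exact no_triangle hgirth (hcyc b) h12 hadj
    · rintro (h | h)
      · rw [h]; exact hcyc a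
      · rw [h]; exact (hcyc b).symm
  constructor
  · intro huvadj hxij
    have hujne : u ≠ x j := fun h => hu ⟨j, h.symm⟩
    have hvine : v ≠ x i := fun h => hv ⟨i, h.symm⟩
    exact no_square hgirth hujne hvine huvadj ((hvj j).mpr rfl) hxij.symm
      (((hui i).mpr rfl).symm)
  · intro hnadj
    by_contra huvn
    have h1 : ¬(j = i + 1 ∨ i = j + 1) := fun h => hnadj ((hAdjx i j).mpr h)
    have hd : j = i + 2 ∨ i = j + 2 := by
      have hgen : ∀ a b : Fin 5, a ≠ b → ¬(b = a + 1 ∨ a = b + 1) →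
          (b = a + 2 ∨ a = b + 2) := by decide
      exact hgen i j hij h1
    have hshift : ∀ (c : Fin 5) (a b : Fin 5),
        G.Adj (x (a + c)) (x (b + c)) ↔ (b = a + 1 ∨ a = b + 1) := by
      intro c a b
      rw [hAdjx]
      rw [show a + c + 1 = (a+1) + c by abel, show b + c + 1 = (b+1) + c by abel,
        add_left_inj, add_left_inj]
    rcases hd with hc | hc
    · refine aux_pendant G hl' (fun k => x (k + i))
        (hinj.comp (add_left_injective i)) (hshift i) u v
        (fun ⟨k, hk⟩ => hu ⟨k + i, hk⟩) (fun ⟨k, hk⟩ => hv ⟨k + i, hk⟩) huv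
        ?_ ?_ huvn
      · intro k
        rw [hui, add_eq_right]
      · intro k
        rw [hvj, hc, show i + 2 = 2 + i from add_comm _ _, add_left_inj]
    · refine aux_pendant G hl' (fun k => x (k + j))
        (hinj.comp (add_left_injective j)) (hshift j) v u
        (fun ⟨k, hk⟩ => hv ⟨k + j, hk⟩) (fun ⟨k, hk⟩ => hu ⟨k + j, hk⟩) huv.symm
        ?_ ?_ (fun h => huvn h.symm)
      · intro k
        rw [hvj, add_eq_right]
      · intro k
        rw [hui, hc, show j + 2 = 2 + j from add_comm _ _, add_left_inj]
end
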